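/- Let n ≥ 2 and 0 < s < 1, and define recursively q̃_0 := 2 and, as long as s q̃_k < n, q̃_{k+1} := n q̃_k/(n − s q̃_k) − b_k where b_k := (1/2) min{ n q̃_k/(n − s q̃_k) − q̃_k , 1/k } (with the convention b_0 := (1/2)(n q̃_0/(n − s q̃_0) − q̃_0)). Then the sequence (q̃_k) is strictly increasing, and there exists a finite index k̄ such that s q̃_{k̄+1} ≥ n; in other words, the recursion cannot produce an infinite sequence with s q̃_k < n for all k. -/

import Mathlib

/-- the integrability bootstrap sequence `q̃₀ = 2`,
`q̃_{k+1} = n q̃_k/(n − s q̃_k) − b_k` (as long as `s q̃_k < n`) is strictly increasing while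
the recursion runs, and the recursion exits in finitely many steps: there is `k` with
`s q̃_{k+1} ≥ n`. -/
theorem stmt6 (n : ℕ) (hn : 2 ≤ n) (s : ℝ) (hs0 : 0 < s) (hs1 : s < 1)
    (q : ℕ → ℝ) (hq0 : q 0 = 2)
    (hrec : ∀ k, s * q k < n →
      q (k+1) = (n : ℝ) * q k / ((n : ℝ) - s * q k) -
        (1/2) * (if k = 0 then ((n : ℝ) * q 0 / ((n : ℝ) - s * q 0) - q 0)
                 else min ((n : ℝ) * q k / ((n : ℝ) - s * q k) - q k) (1 / (k : ℝ)))) :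
    (∀ k, (∀ j ≤ k, s * q j < n) → q k < q (k+1)) ∧
    (∃ k, (n : ℝ) ≤ s * q (k+1)) := by
  have hn2 : (2:ℝ) ≤ (n:ℝ) := by exact_mod_cast hn
  have hnpos : (0:ℝ) < (n:ℝ) := by linarith
  have hsn : 0 < 2*s/(n:ℝ) := by positivity
  -- step lemma: while running and q k ≥ 2, q increases by at least 2s/n
  have step : ∀ k, s * q k < (n:ℝ) → 2 ≤ q k → q k + 2*s/(n:ℝ) ≤ q (k+1) := by
    intro k hk h2
    have hQpos : 0 < q k := by linarith
    have hD : 0 < (n:ℝ) - s * q k := by linarith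
    have hgap : (4*s)/(n:ℝ) ≤ (n:ℝ) * q k / ((n:ℝ) - s * q k) - q k := by
      have heq : (n:ℝ) * q k / ((n:ℝ) - s * q k) - q k
          = s * (q k)^2 / ((n:ℝ) - s * q k) := by
        rw [eq_div_iff hD.ne', sub_mul, div_mul_cancel₀ _ hD.ne']; ring
      rw [heq]
      have hDn : (n:ℝ) - s * q k ≤ (n:ℝ) := by nlinarith
      have h4 : 4*s ≤ s * (q k)^2 := by nlinarith
      calc (4*s)/(n:ℝ) ≤ (4*s)/((n:ℝ) - s*q k) := by gcongr
        _ ≤ s*(q k)^2/((n:ℝ) - s*q k) := by gcongr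
    rw [hrec k hk]
    rcases eq_or_ne k 0 with h0 | h0
    · subst h0
      norm_num
      have h4 : 4*s/(n:ℝ) = 2*(2*s/(n:ℝ)) := by ring
      linarith
    · rw [if_neg h0]
      have hmin : min ((n:ℝ)*q k/((n:ℝ)-s*q k) - q k) (1/(k:ℝ))
          ≤ (n:ℝ)*q k/((n:ℝ)-s*q k) - q k := min_le_left _ _
      have h4 : 4*s/(n:ℝ) = 2*(2*s/(n:ℝ)) := by ring
      linarith
  -- lower bound 2 while the recursion runs
  have ge2 : ∀ k, (∀ j, j < k → s * q j < (n:ℝ)) → 2 ≤ q k := by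
    intro k
    induction k with
    | zero => intro _; rw [hq0]
    | succ m ih =>
      intro h
      have h2 : 2 ≤ q m := ih (fun j hj => h j (hj.trans (Nat.lt_succ_self m)))
      have := step m (h m (Nat.lt_succ_self m)) h2
      linarith
  constructor
  · intro k h
    have h2 : 2 ≤ q k := ge2 k (fun j hj => h j hj.le)
    have := step k (h k le_rfl) h2
    linarith
  · by_contra hcon
    push_neg at hcon
    have hall : ∀ k, s * q k < (n:ℝ) := by
      intro k
      cases k with
      | zero => rw [hq0]; nlinarith
      | succ m => exact hcon m
    have h2all : ∀ k, 2 ≤ q k := fun k => ge2 k (fun j _ => hall j)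
    have grow : ∀ k, 2 + (2*s/(n:ℝ)) * k ≤ q k := by
      intro k
      induction k with
      | zero => simp [hq0]
      | succ m ih =>
        have := step m (hall m) (h2all m)
        push_cast
        linarith
    obtain ⟨k, hk⟩ := exists_nat_ge ((n:ℝ)*(n:ℝ)/(2*s*s))
    have hg := grow k
    have hlt := hall k
    have hkpos : (n:ℝ)*(n:ℝ)/(2*s*s) ≤ (k:ℝ) := hk
    have hnn : (n:ℝ)*(n:ℝ) ≤ 2*s*s*(k:ℝ) := by
      rw [div_le_iff₀ (by positivity)] at hkpos
      linarith
    have h3 : (n:ℝ) ≤ s*(2*s/(n:ℝ)*(k:ℝ)) := by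
      rw [show s*(2*s/(n:ℝ)*(k:ℝ)) = 2*s*s*(k:ℝ)/(n:ℝ) by ring, le_div_iff₀ hnpos]
      nlinarith
    have h4 := mul_le_mul_of_nonneg_left hg hs0.le
    nlinarith
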